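/- Let P be symmetric positive definite, B full row rank, γ = P Bᵀ(BPBᵀ)⁻¹. Then trace((I − γB)P(I − γB)ᵀ) = trace(P) − trace(γBP), and trace(γBP) > 0, so trace((I − γB)P(I − γB)ᵀ) < trace(P). That is, the projected covariance has strictly smaller trace than the unconstrained covariance. -/

import Mathlib

open Matrix

theorem stmt_2 {n k : ℕ} (hk : 1 ≤ k) (P : Matrix (Fin n) (Fin n) ℝ)
    (B : Matrix (Fin k) (Fin n) ℝ) (hP : P.PosDef) (hPsym : P.IsSymm) (hB : B.rank = k) :
    ((1 - (P * Bᵀ * (B * P * Bᵀ)⁻¹) * B) * P * (1 - (P * Bᵀ * (B * P * Bᵀ)⁻¹) * B)ᵀ).trace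
      = P.trace - ((P * Bᵀ * (B * P * Bᵀ)⁻¹) * B * P).trace ∧
    0 < ((P * Bᵀ * (B * P * Bᵀ)⁻¹) * B * P).trace ∧
    ((1 - (P * Bᵀ * (B * P * Bᵀ)⁻¹) * B) * P * (1 - (P * Bᵀ * (B * P * Bᵀ)⁻¹) * B)ᵀ).trace
      < P.trace := by
  have hPt : Pᵀ = P := hPsym
  -- rows of B are linearly independent
  have hli : LinearIndependent ℝ (fun i => B i) := by
    rw [linearIndependent_iff_card_eq_finrank_span]
    have := B.rank_eq_finrank_span_row
    rw [hB] at this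
    simp [Set.finrank, Matrix.row] at this ⊢
    exact this
  have hvm : Function.Injective B.vecMul := Matrix.vecMul_injective_iff.mpr hli
  -- B*P*Bᵀ is positive definite
  set S := B * P * Bᵀ with hSdef
  have hS : S.PosDef := by
    refine Matrix.PosDef.of_dotProduct_mulVec_pos ?_ ?_
    · have := (hP.posSemidef.mul_mul_conjTranspose_same B).isHermitian
      simpa [conjTranspose_eq_transpose_of_trivial] using this
    · intro x hx
      have hx' : Bᵀ *ᵥ x ≠ 0 := by
        rw [Matrix.mulVec_transpose]
        intro h
        exact hx (hvm (show x ᵥ* B = 0 ᵥ* B by simp [h]))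
      have := hP.dotProduct_mulVec_pos hx'
      simpa [hSdef, Matrix.mulVec_mulVec, star_trivial, Matrix.dotProduct_mulVec,
        Matrix.vecMul_transpose, ← Matrix.mulVec_transpose, Matrix.vecMul_mulVec, hPt,
        Matrix.mul_assoc] using this
  have hdet : IsUnit S.det := hS.isUnit.map detMonoidHom
  have hSS : S * S⁻¹ = 1 := Matrix.mul_nonsing_inv _ hdet
  have hSsymm : Sᵀ = S := by
    rw [← conjTranspose_eq_transpose_of_trivial]
    exact hS.isHermitian
  have hSinvsymm : S⁻¹ᵀ = S⁻¹ := by rw [Matrix.transpose_nonsing_inv, hSsymm]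
  set G := P * Bᵀ * S⁻¹ * B with hGdef
  have key : ∀ m (X : Matrix (Fin k) (Fin m) ℝ), B * (P * (Bᵀ * (S⁻¹ * X))) = X := by
    intro m X
    calc B * (P * (Bᵀ * (S⁻¹ * X))) = (B * P * Bᵀ) * S⁻¹ * X := by
          simp only [Matrix.mul_assoc]
      _ = X := by rw [← hSdef, hSS, Matrix.one_mul]
  have hGt : Gᵀ = Bᵀ * S⁻¹ * B * P := by
    simp only [hGdef, Matrix.transpose_mul, hSinvsymm, hPt, Matrix.transpose_transpose,
      Matrix.mul_assoc]
  have hPGt : P * Gᵀ = G * P := by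
    rw [hGt, hGdef]
    simp only [Matrix.mul_assoc]
  have hGG : G * G = G := by
    rw [hGdef]
    calc (P * Bᵀ * S⁻¹ * B) * (P * Bᵀ * S⁻¹ * B)
        = P * Bᵀ * S⁻¹ * (B * (P * (Bᵀ * (S⁻¹ * B)))) := by simp only [Matrix.mul_assoc]
      _ = P * Bᵀ * S⁻¹ * B := by rw [key]
  have hGPGt : G * P * Gᵀ = G * P := by
    rw [Matrix.mul_assoc, hPGt, ← Matrix.mul_assoc, hGG]
  have hmain : (1 - G) * P * (1 - G)ᵀ = P - G * P := by
    calc (1 - G) * P * (1 - G)ᵀ = P - G * P - (P * Gᵀ - G * P * Gᵀ) := by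
          rw [Matrix.transpose_sub, Matrix.transpose_one]; noncomm_ring
      _ = P - G * P := by rw [hPGt, hGPGt, sub_self, sub_zero]
  have hNinv : S⁻¹.PosDef := hS.inv
  set C := B * P with hCdef
  have hPdet : IsUnit P.det := hP.isUnit.map detMonoidHom
  have hCne : C ≠ 0 := by
    intro h
    have hB0 : B = 0 := by
      have := Matrix.mul_nonsing_inv_cancel_right B (A := P) hPdet
      rw [← hCdef, h, Matrix.zero_mul] at this
      exact this.symm
    rw [hB0, Matrix.rank_zero] at hB
    omega
  obtain ⟨a, i, hCai⟩ : ∃ a i, C a i ≠ 0 := by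
    by_contra h
    push_neg at h
    exact hCne (by ext a i; simpa using h a i)
  have hGP : G * P = Cᵀ * S⁻¹ * C := by
    rw [hGdef, hCdef, Matrix.transpose_mul, hPt]
    simp only [Matrix.mul_assoc]
  have hdiag : ∀ j, (Cᵀ * S⁻¹ * C) j j
      = star (fun l => C l j) ⬝ᵥ S⁻¹ *ᵥ (fun l => C l j) := by
    intro j
    simp only [Matrix.mul_apply, Matrix.mulVec, dotProduct, Matrix.transpose_apply,
      star_trivial, Finset.sum_mul, Finset.mul_sum]
    rw [Finset.sum_comm]
    apply Finset.sum_congr rfl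
    intro x _
    apply Finset.sum_congr rfl
    intro y _
    ring
  have htrpos : 0 < (G * P).trace := by
    rw [hGP, Matrix.trace]
    apply Finset.sum_pos'
    · intro j _
      rw [Matrix.diag_apply, hdiag]
      exact hNinv.posSemidef.dotProduct_mulVec_nonneg _
    · refine ⟨i, Finset.mem_univ i, ?_⟩
      rw [Matrix.diag_apply, hdiag]
      apply hNinv.dotProduct_mulVec_pos
      intro h0
      exact hCai (congr_fun h0 a)
  refine ⟨by rw [hmain, Matrix.trace_sub], htrpos, ?_⟩
  rw [hmain, Matrix.trace_sub]
  linarith
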